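/- arXiv:1806.04159 — 2 statements merged into one kernel-verified Lean document; each statement's English description precedes it below -/
import Mathlib

section
/- Let a^ν, a^μ be two symmetric, coercive (constant A_min), bounded (constant A_max) bilinear forms on a Hilbert space H with ‖a^ν − a^μ‖ ≤ δ in operator norm. Let X_k ⊆ X_ℓ ⊆ H be closed subspaces and let P_k^ν, P_k^μ denote the Galerkin projections onto X_k with respect to a^ν and a^μ respectively. Then for all v ∈ X_ℓ: ‖P_k^ν v − P_k^μ v‖_H ≤ A_min^{−3/2} A_max^{1/2} δ · inf_{w ∈ X_k} ‖v − w‖_H. -/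
lemma bilin_sub_aux {H : Type*} [NormedAddCommGroup H] [InnerProductSpace ℝ H]
    (a : H → H → ℝ)
    (hadd : ∀ u v w, a (u + v) w = a u w + a v w)
    (hsmul : ∀ (c : ℝ) (u w : H), a (c • u) w = c * a u w) :
    ∀ u v w, a (u - v) w = a u w - a v w := by
  intro u v w
  have h : u - v = u + (-1 : ℝ) • v := by
    simp [sub_eq_add_neg]
  rw [h, hadd, hsmul]; ring

/-- Stability of Galerkin projections with respect to perturbation of the bilinear form. -/
theorem stmt_3 {H : Type*} [NormedAddCommGroup H] [InnerProductSpace ℝ H]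
    (aν aμ : H → H → ℝ) (Amin Amax δ : ℝ) (hAmin : 0 < Amin) (hAminmax : Amin ≤ Amax)
    (hδ : 0 ≤ δ)
    (hsymmν : ∀ u v, aν u v = aν v u) (hsymmμ : ∀ u v, aμ u v = aμ v u)
    (haddν : ∀ u v w, aν (u + v) w = aν u w + aν v w)
    (haddμ : ∀ u v w, aμ (u + v) w = aμ u w + aμ v w)
    (hsmulν : ∀ (c : ℝ) (u w : H), aν (c • u) w = c * aν u w)
    (hsmulμ : ∀ (c : ℝ) (u w : H), aμ (c • u) w = c * aμ u w)
    (hcoerν : ∀ w, Amin * ‖w‖ ^ 2 ≤ aν w w) (hcoerμ : ∀ w, Amin * ‖w‖ ^ 2 ≤ aμ w w)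
    (hbddν : ∀ u v, |aν u v| ≤ Amax * ‖u‖ * ‖v‖)
    (hbddμ : ∀ u v, |aμ u v| ≤ Amax * ‖u‖ * ‖v‖)
    (hdiff : ∀ u v, |aν u v - aμ u v| ≤ δ * ‖u‖ * ‖v‖)
    (Xk Xl : Submodule ℝ H) (hsub : Xk ≤ Xl)
    (v : H) (hv : v ∈ Xl)
    (pν : H) (hpν : pν ∈ Xk) (hgalν : ∀ w ∈ Xk, aν pν w = aν v w)
    (pμ : H) (hpμ : pμ ∈ Xk) (hgalμ : ∀ w ∈ Xk, aμ pμ w = aμ v w) :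
    ∀ w ∈ Xk, ‖pν - pμ‖ ≤ Amin ^ (-(3 / 2) : ℝ) * Amax ^ ((1 / 2) : ℝ) * δ * ‖v - w‖ := by
  intro w hw
  have hAmax : 0 < Amax := lt_of_lt_of_le hAmin hAminmax
  have hsubν := bilin_sub_aux aν haddν hsmulν
  have hsubμ := bilin_sub_aux aμ haddμ hsmulμ
  have haddμ2 : ∀ u z z', aμ u (z + z') = aμ u z + aμ u z' := by
    intro u z z'
    rw [hsymmμ u (z + z'), haddμ, hsymmμ z u, hsymmμ z' u]
  set e := pν - pμ with he
  have heK : e ∈ Xk := Xk.sub_mem hpν hpμ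
  have horthoμ : ∀ z ∈ Xk, aμ (v - pμ) z = 0 := by
    intro z hz
    rw [hsubμ, hgalμ z hz]; ring
  have key : aν e e = aν (v - pμ) e - aμ (v - pμ) e := by
    rw [horthoμ e heK, sub_zero, he, hsubν, hgalν e heK, ← hsubν]
  have h2 : Amin * ‖e‖ ^ 2 ≤ δ * ‖v - pμ‖ * ‖e‖ :=
    calc Amin * ‖e‖ ^ 2 ≤ aν e e := hcoerν e
    _ = aν (v - pμ) e - aμ (v - pμ) e := key
    _ ≤ |aν (v - pμ) e - aμ (v - pμ) e| := le_abs_self _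
    _ ≤ δ * ‖v - pμ‖ * ‖e‖ := hdiff _ _
  have h3 : Amin * ‖e‖ ≤ δ * ‖v - pμ‖ := by
    rcases (norm_nonneg e).eq_or_lt with h | h
    · rw [← h, mul_zero]; positivity
    · exact le_of_mul_le_mul_right (by nlinarith [h2]) h
  -- Céa in energy norm
  have hortho2 : aμ (v - pμ) (pμ - w) = 0 := horthoμ _ (Xk.sub_mem hpμ hw)
  have hvw : v - w = (v - pμ) + (pμ - w) := by abel
  have hdecomp : aμ (v - w) (v - w)
      = aμ (v - pμ) (v - pμ) + aμ (pμ - w) (pμ - w) := by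
    rw [hvw, haddμ, haddμ2, haddμ2, hortho2, hsymmμ (pμ - w) (v - pμ), hortho2]; ring
  have h4 : Amin * ‖v - pμ‖ ^ 2 ≤ Amax * ‖v - w‖ ^ 2 := by
    have h0 : 0 ≤ aμ (pμ - w) (pμ - w) := le_trans (by positivity) (hcoerμ _)
    calc Amin * ‖v - pμ‖ ^ 2 ≤ aμ (v - pμ) (v - pμ) := hcoerμ _
    _ ≤ aμ (v - w) (v - w) := by linarith [hdecomp]
    _ ≤ |aμ (v - w) (v - w)| := le_abs_self _
    _ ≤ Amax * ‖v - w‖ * ‖v - w‖ := hbddμ _ _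
    _ = Amax * ‖v - w‖ ^ 2 := by ring
  have h5 : ‖v - pμ‖ ≤ Real.sqrt (Amax / Amin) * ‖v - w‖ := by
    have hsq : ‖v - pμ‖ ^ 2 ≤ (Amax / Amin) * ‖v - w‖ ^ 2 := by
      rw [div_mul_eq_mul_div, le_div_iff₀ hAmin]; nlinarith [h4]
    calc ‖v - pμ‖ = Real.sqrt (‖v - pμ‖ ^ 2) := (Real.sqrt_sq (norm_nonneg _)).symm
    _ ≤ Real.sqrt ((Amax / Amin) * ‖v - w‖ ^ 2) := Real.sqrt_le_sqrt hsq
    _ = Real.sqrt (Amax / Amin) * ‖v - w‖ := by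
        rw [Real.sqrt_mul (by positivity), Real.sqrt_sq (norm_nonneg _)]
  have h3' : ‖e‖ ≤ (δ / Amin) * ‖v - pμ‖ := by
    rw [div_mul_eq_mul_div, le_div_iff₀ hAmin]; nlinarith [h3]
  have h6 : ‖e‖ ≤ (δ / Amin) * (Real.sqrt (Amax / Amin) * ‖v - w‖) :=
    h3'.trans (mul_le_mul_of_nonneg_left h5 (by positivity))
  have hconst : Amin ^ (-(3 / 2) : ℝ) * Amax ^ ((1 / 2) : ℝ) * δ
      = (δ / Amin) * Real.sqrt (Amax / Amin) := by
    rw [Real.sqrt_eq_rpow, Real.div_rpow hAmax.le hAmin.le,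
      show (-(3 / 2) : ℝ) = (-1) + (-(1 / 2)) by norm_num,
      Real.rpow_add hAmin, Real.rpow_neg_one, Real.rpow_neg hAmin.le]
    field_simp
  rw [hconst, mul_assoc]
  exact h6
end

section
/- Let g : [−1/2,1/2]^s → ℝ be C² and suppose g(ω) = 0 whenever ω_i = 0 for all i > r (0 ≤ r ≤ s). Then there exists a function g₀ in the span of functions of the form (ω ↦ α(ω₁,…,ω_r)·ω_i) for r+1 ≤ i ≤ s, namely g₀(ω) = Σ_{i=r+1}^s ω_i ∂_{ω_i} g(ω₁,…,ω_r,0,…,0), such that ‖g − g₀‖_{L^∞} ≤ (1/2) Σ_{i=r+1}^{s} Σ_{j=r+1}^{i} ‖∂_{ω_i}∂_{ω_j} g‖_{L^∞}. -/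
/-- Second-order remainder bound: if a C² function `g` on `[-1/2,1/2]^s` vanishes whenever all
coordinates with index `≥ r` vanish, then subtracting the explicit function
`g₀(ω) = Σ_{i ≥ r} ω_i ∂_i g(ω₁,…,ω_r,0,…,0)` (which lies in the span of functions
`ω ↦ α(ω₁,…,ω_r) ω_i`) leaves a remainder bounded by half the sum of the sup norms of the
second derivatives in the coordinates with index `≥ r`. -/
theorem stmt_7 (s r : ℕ) (hr : r ≤ s)
    (g : (Fin s → ℝ) → ℝ) (hg : ContDiff ℝ 2 g)
    (hzero : ∀ ω : Fin s → ℝ, (∀ i, |ω i| ≤ 1 / 2) →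
      (∀ i : Fin s, r ≤ (i : ℕ) → ω i = 0) → g ω = 0)
    (M2 : Fin s → Fin s → ℝ)
    (hM2 : ∀ (i j : Fin s) (ω : Fin s → ℝ), (∀ k, |ω k| ≤ 1 / 2) →
      |fderiv ℝ (fun x => fderiv ℝ g x (Pi.single j 1)) ω (Pi.single i 1)| ≤ M2 i j)
    (g₀ : (Fin s → ℝ) → ℝ)
    (hg₀ : ∀ ω : Fin s → ℝ, g₀ ω =
      ∑ i ∈ Finset.univ.filter (fun i : Fin s => r ≤ (i : ℕ)),
        ω i * fderiv ℝ g (fun j => if (j : ℕ) < r then ω j else 0) (Pi.single i 1)) :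
    ∀ ω : Fin s → ℝ, (∀ j, |ω j| ≤ 1 / 2) →
      |g ω - g₀ ω| ≤ (1 / 2) *
        ∑ i ∈ Finset.univ.filter (fun i : Fin s => r ≤ (i : ℕ)),
          ∑ j ∈ Finset.univ.filter (fun j : Fin s => r ≤ (j : ℕ) ∧ (j : ℕ) ≤ (i : ℕ)), M2 i j := by
  classical
  intro ω hω
  set S : Finset (Fin s) := Finset.univ.filter (fun i : Fin s => r ≤ (i : ℕ)) with hS
  set p : Fin s → ℝ := fun j => if (j : ℕ) < r then ω j else 0 with hp
  set v : Fin s → ℝ := fun j => if (j : ℕ) < r then 0 else ω j with hv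
  set γ : ℝ → (Fin s → ℝ) := fun t => p + t • v with hγ
  have hγ0 : γ 0 = p := by funext j; simp [hγ]
  have hγ1 : γ 1 = ω := by
    funext j; by_cases h : (j : ℕ) < r <;> simp [hγ, hp, hv, h]
  have hcube : ∀ t ∈ Set.Icc (0:ℝ) 1, ∀ k, |γ t k| ≤ 1 / 2 := by
    intro t ht k
    by_cases h : (k : ℕ) < r
    · simpa [hγ, hp, hv, h] using hω k
    · have : γ t k = t * ω k := by simp [hγ, hp, hv, h]
      rw [this, abs_mul]
      have h1 : |t| ≤ 1 := by rw [abs_le]; exact ⟨le_trans (by norm_num) ht.1, ht.2⟩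
      calc |t| * |ω k| ≤ 1 * (1/2) := by
            exact mul_le_mul h1 (hω k) (abs_nonneg _) zero_le_one
        _ = 1/2 := by ring
  -- differentiability facts
  have hgdiff : Differentiable ℝ g := hg.differentiable (by norm_num)
  have hf'cd : ContDiff ℝ 1 (fderiv ℝ g) := hg.fderiv_right (by norm_num)
  have hf'diff : Differentiable ℝ (fderiv ℝ g) := hf'cd.differentiable one_ne_zero
  set f'' : (Fin s → ℝ) → ((Fin s → ℝ) →L[ℝ] ((Fin s → ℝ) →L[ℝ] ℝ)) :=
    fderiv ℝ (fderiv ℝ g) with hf''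
  have hf''at : ∀ x, HasFDerivAt (fderiv ℝ g) (f'' x) x := fun x => (hf'diff x).hasFDerivAt
  have hsymm : ∀ x u w, f'' x u w = f'' x w u := fun x u w =>
    second_derivative_symmetric (fun y => (hgdiff y).hasFDerivAt) (hf''at x) u w
  have hM2' : ∀ (i j : Fin s) (x : Fin s → ℝ), (∀ k, |x k| ≤ 1 / 2) →
      |f'' x (Pi.single i 1) (Pi.single j 1)| ≤ M2 i j := by
    intro i j x hx
    have hcomp : HasFDerivAt (fun y => fderiv ℝ g y (Pi.single j 1))
        ((ContinuousLinearMap.apply ℝ ℝ ((Pi.single j 1 : Fin s → ℝ))).comp (f'' x)) x :=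
      (ContinuousLinearMap.apply ℝ ℝ ((Pi.single j 1 : Fin s → ℝ))).hasFDerivAt.comp x (hf''at x)
    have h2 := hM2 i j x hx
    rw [hcomp.fderiv] at h2
    simpa using h2
  have hM2nn : ∀ i : Fin s, 0 ≤ M2 i i := by
    intro i
    exact le_trans (abs_nonneg _) (hM2' i i 0 (by intro k; rw [Pi.zero_apply, abs_zero]; norm_num))
  -- v as a sum of single vectors
  have hvsum : v = ∑ i ∈ S, ω i • (Pi.single i 1 : Fin s → ℝ) := by
    funext j
    rw [Finset.sum_apply]
    simp only [Pi.smul_apply, Pi.single_apply, smul_eq_mul, mul_ite, mul_one, mul_zero]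
    rw [Finset.sum_ite_eq S j ω]
    by_cases h : (j : ℕ) < r
    · simp [hS, hv, h, Finset.mem_filter, Nat.not_le.mpr h]
    · simp [hS, hv, h, Finset.mem_filter, Nat.le_of_not_lt h]
  -- g₀ ω equals the derivative at p in direction v
  have hg₀' : g₀ ω = fderiv ℝ g p v := by
    rw [hg₀ ω, hvsum, map_sum]
    simp [smul_eq_mul, mul_comm]
    rfl
  -- the constant
  set C : ℝ := (1 / 2) * ∑ i ∈ S, ∑ j ∈ Finset.univ.filter
      (fun j : Fin s => r ≤ (j : ℕ) ∧ (j : ℕ) ≤ (i : ℕ)), M2 i j with hC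
  -- bound on the second derivative in direction v, v
  have hbound : ∀ x : Fin s → ℝ, (∀ k, |x k| ≤ 1 / 2) → |f'' x v v| ≤ C := by
    intro x hx
    have hexp : f'' x v v = ∑ i ∈ S, ∑ j ∈ S,
        ω i * ω j * f'' x (Pi.single i 1) (Pi.single j 1) := by
      conv_lhs => rw [hvsum]
      simp only [map_sum, map_smul, ContinuousLinearMap.sum_apply,
        ContinuousLinearMap.smul_apply, smul_eq_mul, Finset.sum_apply, Finset.mul_sum]
      conv_lhs => rw [Finset.sum_comm]
      refine Finset.sum_congr rfl fun i _ => Finset.sum_congr rfl fun j _ => by ring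
    rw [hexp]
    have step1 : |∑ i ∈ S, ∑ j ∈ S, ω i * ω j * f'' x (Pi.single i 1) (Pi.single j 1)|
        ≤ ∑ i ∈ S, ∑ j ∈ S, (1/4) * (if (j : Fin s) ≤ i then M2 i j else M2 j i) := by
      refine le_trans (Finset.abs_sum_le_sum_abs _ _) ?_
      refine Finset.sum_le_sum fun i _ => ?_
      refine le_trans (Finset.abs_sum_le_sum_abs _ _) ?_
      refine Finset.sum_le_sum fun j _ => ?_
      rw [abs_mul, abs_mul]
      have hij : |f'' x (Pi.single i 1) (Pi.single j 1)|
          ≤ (if (j : Fin s) ≤ i then M2 i j else M2 j i) := by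
        by_cases h : (j : Fin s) ≤ i
        · simpa [h] using hM2' i j x hx
        · rw [if_neg h, hsymm x]
          exact hM2' j i x hx
      have h4 : |ω i| * |ω j| ≤ 1/4 := by
        calc |ω i| * |ω j| ≤ (1/2) * (1/2) :=
              mul_le_mul (hω i) (hω j) (abs_nonneg _) (by norm_num)
          _ = 1/4 := by norm_num
      calc |ω i| * |ω j| * |f'' x (Pi.single i 1) (Pi.single j 1)|
          ≤ (1/4) * |f'' x (Pi.single i 1) (Pi.single j 1)| := by
            exact mul_le_mul_of_nonneg_right h4 (abs_nonneg _)
        _ ≤ (1/4) * (if (j : Fin s) ≤ i then M2 i j else M2 j i) := by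
            exact mul_le_mul_of_nonneg_left hij (by norm_num)
    refine le_trans step1 ?_
    -- combinatorial estimate
    have hsplit : ∀ i j : Fin s,
        (if (j : Fin s) ≤ i then M2 i j else M2 j i)
        = (if (j : Fin s) ≤ i then M2 i j else 0) + (if i < j then M2 j i else 0) := by
      intro i j
      by_cases h : (j : Fin s) ≤ i
      · simp [h, not_lt.mpr h]
      · simp [h, lt_of_not_ge h]
    have key : ∑ i ∈ S, ∑ j ∈ S, (if (j : Fin s) ≤ i then M2 i j else M2 j i)
        ≤ 2 * ∑ i ∈ S, ∑ j ∈ S, (if (j : Fin s) ≤ i then M2 i j else 0) := by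
      simp only [hsplit, Finset.sum_add_distrib]
      have hswap : ∑ i ∈ S, ∑ j ∈ S, (if i < j then M2 j i else 0)
          = ∑ i ∈ S, ∑ j ∈ S, (if (j : Fin s) < i then M2 i j else 0) := by
        rw [Finset.sum_comm]
      rw [hswap]
      have hle : ∑ i ∈ S, ∑ j ∈ S, (if (j : Fin s) < i then M2 i j else 0)
          ≤ ∑ i ∈ S, ∑ j ∈ S, (if (j : Fin s) ≤ i then M2 i j else 0) := by
        refine Finset.sum_le_sum fun i _ => Finset.sum_le_sum fun j _ => ?_
        by_cases h : (j : Fin s) < i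
        · simp [h, le_of_lt h]
        · by_cases h2 : (j : Fin s) ≤ i
          · have : j = i := le_antisymm h2 (not_lt.mp h)
            simp [h, h2, this, hM2nn i]
          · simp [h, h2]
      linarith
    have hfin : ∑ i ∈ S, ∑ j ∈ S, (if (j : Fin s) ≤ i then M2 i j else 0)
        = ∑ i ∈ S, ∑ j ∈ Finset.univ.filter
            (fun j : Fin s => r ≤ (j : ℕ) ∧ (j : ℕ) ≤ (i : ℕ)), M2 i j := by
      refine Finset.sum_congr rfl fun i _ => ?_
      rw [Finset.sum_filter, Finset.sum_filter]
      refine Finset.sum_congr rfl fun j _ => ?_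
      by_cases h1 : r ≤ (j : ℕ) <;> by_cases h2 : (j : ℕ) ≤ (i : ℕ) <;>
        simp [h1, h2, Fin.le_def]
    calc ∑ i ∈ S, ∑ j ∈ S, (1/4 : ℝ) * (if (j : Fin s) ≤ i then M2 i j else M2 j i)
        = (1/4) * ∑ i ∈ S, ∑ j ∈ S, (if (j : Fin s) ≤ i then M2 i j else M2 j i) := by
          rw [Finset.mul_sum]
          refine Finset.sum_congr rfl fun i _ => ?_
          rw [Finset.mul_sum]
      _ ≤ (1/4) * (2 * ∑ i ∈ S, ∑ j ∈ S, (if (j : Fin s) ≤ i then M2 i j else 0)) := by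
          exact mul_le_mul_of_nonneg_left key (by norm_num)
      _ = C := by rw [hC, hfin]; ring
  -- derivative computations along the segment
  have hγderiv : ∀ t : ℝ, HasDerivAt γ v t := by
    intro t
    have h1 : HasDerivAt (fun y : ℝ => y • v) ((1:ℝ) • v) t := (hasDerivAt_id t).smul_const v
    simpa [hγ] using h1.const_add p
  set A : ℝ → ℝ := fun t => fderiv ℝ g (γ t) v with hA
  have hAderiv : ∀ t : ℝ, HasDerivAt A (f'' (γ t) v v) t := by
    intro t
    have h1 : HasFDerivAt (fun x => fderiv ℝ g x v)
        ((ContinuousLinearMap.apply ℝ ℝ v).comp (f'' (γ t))) (γ t) :=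
      (ContinuousLinearMap.apply ℝ ℝ v).hasFDerivAt.comp (γ t) (hf''at (γ t))
    have h2 := h1.comp_hasDerivAt t (hγderiv t)
    exact h2
  have hhderiv : ∀ t : ℝ, HasDerivAt (fun u => g (γ u)) (A t) t := by
    intro t
    exact (hgdiff (γ t)).hasFDerivAt.comp_hasDerivAt t (hγderiv t)
  have hCnn : 0 ≤ C := le_trans (abs_nonneg _) (hbound (γ 0) (hcube 0 (by norm_num)))
  -- step 1 : |A t - A 0| ≤ C on [0,1]
  have step1 : ∀ t ∈ Set.Icc (0:ℝ) 1, |A t - A 0| ≤ C := by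
    intro t ht
    have h := Convex.norm_image_sub_le_of_norm_hasDerivWithin_le
      (f := A) (f' := fun u => f'' (γ u) v v) (s := Set.Icc (0:ℝ) 1) (C := C)
      (fun u hu => (hAderiv u).hasDerivWithinAt)
      (fun u hu => by simpa using hbound (γ u) (hcube u hu)) (convex_Icc 0 1)
      (Set.left_mem_Icc.mpr zero_le_one) ht
    have h2 : ‖A t - A 0‖ ≤ C * ‖t - 0‖ := h
    calc |A t - A 0| ≤ C * ‖t - 0‖ := h2
      _ ≤ C * 1 := by
          refine mul_le_mul_of_nonneg_left ?_ hCnn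
          rw [Real.norm_eq_abs, sub_zero, abs_le]
          exact ⟨le_trans (by norm_num) ht.1, ht.2⟩
      _ = C := mul_one C
  -- step 2 : MVT for k t = g (γ t) - t * A 0
  have hkderiv : ∀ t : ℝ, HasDerivAt (fun u => g (γ u) - u * A 0) (A t - A 0) t := by
    intro t
    exact (hhderiv t).sub (hasDerivAt_mul_const (A 0))
  have step2 : ‖(g (γ 1) - 1 * A 0) - (g (γ 0) - 0 * A 0)‖ ≤ C * ‖(1:ℝ) - 0‖ :=
    Convex.norm_image_sub_le_of_norm_hasDerivWithin_le
      (f := fun u => g (γ u) - u * A 0) (f' := fun t => A t - A 0)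
      (s := Set.Icc (0:ℝ) 1) (C := C)
      (fun u hu => (hkderiv u).hasDerivWithinAt)
      (fun u hu => by simpa using step1 u hu) (convex_Icc 0 1)
      (Set.left_mem_Icc.mpr zero_le_one) (Set.right_mem_Icc.mpr zero_le_one)
  have hgp : g p = 0 := by
    refine hzero p (fun i => ?_) (fun i hi => ?_)
    · by_cases h : (i : ℕ) < r
      · simpa [hp, h] using hω i
      · simp [hp, h]
    · simp [hp, Nat.not_lt.mpr hi]
  have hA0 : A 0 = g₀ ω := by simp only [hA, hγ0, hg₀']
  have final : |g ω - g₀ ω| ≤ C := by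
    have := step2
    rw [hγ1, hγ0, hgp] at this
    simpa [hA0] using this
  exact final
end
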